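/- Let n ≥ 3 be odd. In D_{2n} = ⟨a, s : a^{2n} = s^2 = (as)^2 = 1⟩, the tuple (a^n, a^n, s, a^2 s, a^2) is a generating vector of type (0; 2,2,2,2,n): the five elements generate D_{2n}, the first four have order 2, the fifth has order n, and their product is the identity. -/

import Mathlib

open DihedralGroup

/-- For odd `n ≥ 3`, the tuple `(a^n, a^n, s, a^2 s, a^2)` is a generating
vector of `D_{2n}` of type `(0; 2,2,2,2,n)`. -/
theorem stmt_7 (n : ℕ) (hn : 3 ≤ n) (hodd : Odd n) :
    orderOf ((r 1 : DihedralGroup (2 * n)) ^ n) = 2 ∧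
    orderOf (sr 0 : DihedralGroup (2 * n)) = 2 ∧
    orderOf ((r 1 : DihedralGroup (2 * n)) ^ 2 * sr 0) = 2 ∧
    orderOf ((r 1 : DihedralGroup (2 * n)) ^ 2) = n ∧
    (r 1 : DihedralGroup (2 * n)) ^ n * (r 1) ^ n * sr 0 * ((r 1) ^ 2 * sr 0) *
        (r 1) ^ 2 = 1 ∧
    Subgroup.closure
        ({(r 1 : DihedralGroup (2 * n)) ^ n, sr 0, (r 1) ^ 2 * sr 0, (r 1) ^ 2} :
          Set (DihedralGroup (2 * n))) = ⊤ := by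
  have hn0 : 0 < n := by omega
  haveI : NeZero (2 * n) := ⟨by omega⟩
  have h2n : ((2 * n : ℕ) : ZMod (2 * n)) = 0 := ZMod.natCast_self _
  refine ⟨?_, orderOf_sr 0, ?_, ?_, ?_, ?_⟩
  · -- orderOf (r 1 ^ n) = 2
    rw [r_one_pow]
    refine orderOf_eq_prime ?_ ?_
    · show r (n : ZMod (2 * n)) ^ 2 = 1
      have : ((n : ZMod (2 * n)) + n) = 0 := by
        have : ((n : ZMod (2*n)) + n) = ((2 * n : ℕ) : ZMod (2*n)) := by push_cast; ring
        rw [this, h2n]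
      simp [sq, one_def, this, -r_zero]
    · simp only [one_def, ne_eq, r.injEq]
      intro h
      have h2 := (ZMod.natCast_eq_zero_iff n (2*n)).1 h
      have := Nat.le_of_dvd hn0 h2
      omega
  · rw [r_one_pow]
    exact orderOf_sr _
  · rw [orderOf_pow, orderOf_r_one]
    have hg : Nat.gcd (2 * n) 2 = 2 := by
      rw [Nat.gcd_comm]
      simp
    rw [hg]
    omega
  · -- product equals 1
    rw [r_one_pow]
    have hnn : (r (n : ZMod (2*n)) * r (n : ZMod (2*n)) : DihedralGroup (2*n)) = 1 := by
      have : ((n : ZMod (2*n)) + n) = 0 := by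
        have : ((n : ZMod (2*n)) + n) = ((2 * n : ℕ) : ZMod (2*n)) := by push_cast; ring
        rw [this, h2n]
      simp [one_def, this, -r_zero]
    show r _ * r _ * sr 0 * (r 1 ^ 2 * sr 0) * r 1 ^ 2 = 1
    rw [hnn]
    simp [sq, one_def, -r_zero]
  · -- closure = top
    rw [eq_top_iff]
    rintro x -
    set S : Set (DihedralGroup (2*n)) :=
      {(r 1 : DihedralGroup (2 * n)) ^ n, sr 0, (r 1) ^ 2 * sr 0, (r 1) ^ 2}
    have hrn : (r 1 : DihedralGroup (2*n)) ^ n ∈ Subgroup.closure S :=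
      Subgroup.subset_closure (by simp [S])
    have hs0 : (sr 0 : DihedralGroup (2*n)) ∈ Subgroup.closure S :=
      Subgroup.subset_closure (by simp [S])
    have hr2 : (r 1 : DihedralGroup (2*n)) ^ 2 ∈ Subgroup.closure S :=
      Subgroup.subset_closure (by simp [S])
    obtain ⟨k, hk⟩ := hodd
    have hr1 : (r 1 : DihedralGroup (2*n)) ∈ Subgroup.closure S := by
      have h : ((r 1 : DihedralGroup (2*n)) ^ 2) ^ k * r 1 = (r 1) ^ n := by
        rw [← pow_mul, ← pow_succ, hk]
      have h2 : (r 1 : DihedralGroup (2*n)) =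
          (((r 1 : DihedralGroup (2*n)) ^ 2) ^ k)⁻¹ * (r 1) ^ n := by
        rw [eq_inv_mul_iff_mul_eq, h]
      rw [h2]
      exact mul_mem (inv_mem (pow_mem hr2 k)) hrn
    have hri : ∀ i : ZMod (2*n), (r i : DihedralGroup (2*n)) ∈ Subgroup.closure S := by
      intro i
      have : (r i : DihedralGroup (2*n)) = (r 1) ^ (i.val) := by
        rw [r_one_pow, ZMod.natCast_val, ZMod.cast_id]
      rw [this]
      exact pow_mem hr1 _
    cases x with
    | r i => exact hri i
    | sr i =>
      have : (sr i : DihedralGroup (2*n)) = sr 0 * r i := by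
        show _ = sr (0 + i)
        rw [zero_add]
      rw [this]
      exact mul_mem hs0 (hri i)
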